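/- Let γ : I → R³ be a C⁴ curve on an open interval I, and let t₀ ∈ I be such that the vectors γ'(t₀), γ''(t₀), γ'''(t₀), γ''''(t₀) span R³. Then there exists ε > 0 such that there do not exist a nonzero vector n ∈ R³, a constant c ∈ R, and five distinct points t₁, …, t₅ ∈ (t₀ − ε, t₀ + ε) ∩ I with ⟨n, γ(t_i)⟩ = c for all i = 1, …, 5; that is, no affine plane meets γ in five points near t₀. -/

import Mathlib

open Set Filter Topology

/-- Rolle step for a strictly monotone tuple of points where `g` takes a constant value. -/
lemma rolle_tuple {g : ℝ → ℝ} (hg : Differentiable ℝ g) {m : ℕ}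
    {u : Fin (m+1) → ℝ} (hu : StrictMono u) {c : ℝ} (hz : ∀ i, g (u i) = c)
    {a b : ℝ} (hmem : ∀ i, u i ∈ Set.Ioo a b) :
    ∃ v : Fin m → ℝ, StrictMono v ∧ (∀ i, v i ∈ Set.Ioo a b) ∧ ∀ i, deriv g (v i) = 0 := by
  have key : ∀ i : Fin m, ∃ x ∈ Set.Ioo (u i.castSucc) (u i.succ), deriv g x = 0 := by
    intro i
    exact exists_deriv_eq_zero (hu Fin.castSucc_lt_succ) hg.continuous.continuousOn
      ((hz _).trans (hz _).symm)
  choose v hv1 hv2 using key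
  refine ⟨v, ?_, ?_, hv2⟩
  · intro i j hij
    have h1 : v i < u i.succ := (hv1 i).2
    have h2 : u j.castSucc < v j := (hv1 j).1
    have h3 : u i.succ ≤ u j.castSucc := by
      apply hu.monotone
      rw [Fin.le_def]
      simp only [Fin.val_succ, Fin.coe_castSucc]
      exact hij
    linarith
  · intro i
    exact ⟨lt_trans (hmem i.castSucc).1 (hv1 i).1, lt_trans (hv1 i).2 (hmem i.succ).2⟩

lemma exists_strictMono_of_injective {m : ℕ} {t : Fin m → ℝ} (ht : Function.Injective t) :
    ∃ u : Fin m → ℝ, StrictMono u ∧ ∀ i, ∃ j, u i = t j := by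
  classical
  have hcard : (Finset.univ.image t).card = m := by
    rw [Finset.card_image_of_injective _ ht, Finset.card_univ, Fintype.card_fin]
  refine ⟨fun i => ((Finset.univ.image t).orderIsoOfFin hcard i : ℝ), ?_, ?_⟩
  · intro i j hij
    exact Subtype.coe_lt_coe.mpr (((Finset.univ.image t).orderIsoOfFin hcard).strictMono hij)
  · intro i
    have := ((Finset.univ.image t).orderIsoOfFin hcard i).2
    rw [Finset.mem_image] at this
    obtain ⟨j, -, hj⟩ := this
    exact ⟨j, hj.symm⟩

lemma iteratedDeriv_inner_comp (w : EuclideanSpace ℝ (Fin 3)) {γ : ℝ → EuclideanSpace ℝ (Fin 3)}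
    (hγ : ContDiff ℝ 4 γ) {j : ℕ} (hj : (j : ℕ∞) ≤ 4) (x : ℝ) :
    iteratedDeriv j (fun s => (inner ℝ w (γ s) : ℝ)) x = inner ℝ w (iteratedDeriv j γ x) := by
  have h : (fun s => (inner ℝ w (γ s) : ℝ)) = (innerSL ℝ w) ∘ γ := rfl
  rw [h, iteratedDeriv_eq_iteratedFDeriv,
    (innerSL ℝ w).iteratedFDeriv_comp_left (x := x) hγ.contDiffAt (by exact_mod_cast hj),
    iteratedDeriv_eq_iteratedFDeriv]
  rfl

theorem stmt_18 (γ : ℝ → EuclideanSpace ℝ (Fin 3))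
    (I : Set ℝ) (hI : IsOpen I) (t₀ : ℝ) (ht₀ : t₀ ∈ I)
    (hγ : ContDiff ℝ 4 γ)
    (hspan : Submodule.span ℝ
      {iteratedDeriv 1 γ t₀, iteratedDeriv 2 γ t₀,
        iteratedDeriv 3 γ t₀, iteratedDeriv 4 γ t₀} = ⊤) :
    ∃ ε > 0, ¬ ∃ (n : EuclideanSpace ℝ (Fin 3)) (c : ℝ) (t : Fin 5 → ℝ),
      n ≠ 0 ∧ Function.Injective t ∧
      (∀ i, t i ∈ Set.Ioo (t₀ - ε) (t₀ + ε) ∩ I) ∧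
      ∀ i, (inner ℝ n (γ (t i)) : ℝ) = c := by
  by_contra hcon
  push_neg at hcon
  have H : ∀ k : ℕ, ∃ (n : EuclideanSpace ℝ (Fin 3)) (s : Fin 4 → ℝ), ‖n‖ = 1 ∧
      (∀ j, s j ∈ Set.Ioo (t₀ - ((k : ℝ)+1)⁻¹) (t₀ + ((k : ℝ)+1)⁻¹)) ∧
      ∀ j : Fin 4, (inner ℝ n (iteratedDeriv (j.1+1) γ (s j)) : ℝ) = 0 := by
    intro k
    obtain ⟨n, c, t, hn0, hinj, hmem, hval⟩ := hcon (((k : ℝ)+1)⁻¹) (by positivity)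
    set F : ℝ → ℝ := fun x => (inner ℝ n (γ x) : ℝ) with hF
    have hFc : ContDiff ℝ 4 F := (innerSL ℝ n).contDiff.comp hγ
    obtain ⟨u, hu, hut⟩ := exists_strictMono_of_injective hinj
    have huz : ∀ i, F (u i) = c := by
      intro i; obtain ⟨j, hj⟩ := hut i; rw [hj]; exact hval j
    have humem : ∀ i, u i ∈ Set.Ioo (t₀ - ((k : ℝ)+1)⁻¹) (t₀ + ((k : ℝ)+1)⁻¹) := by
      intro i; obtain ⟨j, hj⟩ := hut i; rw [hj]; exact (hmem j).1
    -- Rolle four times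
    obtain ⟨v1, hv1m, hv1mem, hv1z⟩ := rolle_tuple (hFc.differentiable (by norm_num)) hu huz humem
    have hv1z' : ∀ i, iteratedDeriv 1 F (v1 i) = 0 := by
      intro i; rw [iteratedDeriv_one]; exact hv1z i
    obtain ⟨v2, hv2m, hv2mem, hv2z⟩ := rolle_tuple
      (hFc.differentiable_iteratedDeriv 1 (by norm_num)) hv1m hv1z' hv1mem
    have hv2z' : ∀ i, iteratedDeriv 2 F (v2 i) = 0 := by
      intro i; rw [iteratedDeriv_succ]; exact hv2z i
    obtain ⟨v3, hv3m, hv3mem, hv3z⟩ := rolle_tuple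
      (hFc.differentiable_iteratedDeriv 2 (by norm_num)) hv2m hv2z' hv2mem
    have hv3z' : ∀ i, iteratedDeriv 3 F (v3 i) = 0 := by
      intro i; rw [iteratedDeriv_succ]; exact hv3z i
    obtain ⟨v4, hv4m, hv4mem, hv4z⟩ := rolle_tuple
      (hFc.differentiable_iteratedDeriv 3 (by norm_num)) hv3m hv3z' hv3mem
    have hv4z' : ∀ i, iteratedDeriv 4 F (v4 i) = 0 := by
      intro i; rw [iteratedDeriv_succ]; exact hv4z i
    refine ⟨‖n‖⁻¹ • n, ![v1 0, v2 0, v3 0, v4 0], norm_smul_inv_norm hn0, ?_, ?_⟩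
    · intro j
      fin_cases j
      · exact hv1mem 0
      · exact hv2mem 0
      · exact hv3mem 0
      · exact hv4mem 0
    · intro j
      have key : ∀ (p : ℕ) (x : ℝ), (p : ℕ∞) ≤ 4 → iteratedDeriv p F x = 0 →
          (inner ℝ (‖n‖⁻¹ • n) (iteratedDeriv p γ x) : ℝ) = 0 := by
        intro p x hp hx
        rw [real_inner_smul_left, ← iteratedDeriv_inner_comp n hγ hp, hx, mul_zero]
      fin_cases j
      · exact key 1 _ (by norm_num) (hv1z' 0)
      · exact key 2 _ (by norm_num) (hv2z' 0)
      · exact key 3 _ (by norm_num) (hv3z' 0)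
      · exact key 4 _ (by norm_num) (hv4z' 0)
  choose n s hn hs hzero using H
  obtain ⟨w, hw, φ, hφ, hwt⟩ := (isCompact_sphere (0 : EuclideanSpace ℝ (Fin 3)) 1).tendsto_subseq
    (x := n) (fun k => by simpa [mem_sphere_zero_iff_norm] using hn k)
  have hwnorm : ‖w‖ = 1 := mem_sphere_zero_iff_norm.mp hw
  have hεt : Tendsto (fun k : ℕ => ((k : ℝ)+1)⁻¹) atTop (nhds 0) := by
    simpa [one_div] using tendsto_one_div_add_atTop_nhds_zero_nat (𝕜 := ℝ)
  have hst : ∀ j : Fin 4, Tendsto (fun k => s (φ k) j) atTop (nhds t₀) := by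
    intro j
    have hle : ∀ k : ℕ, t₀ - ((k : ℝ)+1)⁻¹ ≤ s k j := fun k => le_of_lt (hs k j).1
    have hge : ∀ k : ℕ, s k j ≤ t₀ + ((k : ℝ)+1)⁻¹ := fun k => le_of_lt (hs k j).2
    have h1 : Tendsto (fun k : ℕ => t₀ - ((k : ℝ)+1)⁻¹) atTop (nhds t₀) := by
      simpa using tendsto_const_nhds.sub hεt
    have h2 : Tendsto (fun k : ℕ => t₀ + ((k : ℝ)+1)⁻¹) atTop (nhds t₀) := by
      simpa using tendsto_const_nhds.add hεt
    have := tendsto_of_tendsto_of_tendsto_of_le_of_le h1 h2 hle hge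
    exact this.comp hφ.tendsto_atTop
  have hlim : ∀ j : Fin 4, (inner ℝ w (iteratedDeriv (j.1+1) γ t₀) : ℝ) = 0 := by
    intro j
    have hcont : Continuous (iteratedDeriv (j.1+1) γ) :=
      hγ.continuous_iteratedDeriv (j.1+1) (by exact_mod_cast (by omega : j.1+1 ≤ 4))
    have hA : Tendsto (fun k => (inner ℝ (n (φ k)) (iteratedDeriv (j.1+1) γ (s (φ k) j)) : ℝ))
        atTop (nhds (inner ℝ w (iteratedDeriv (j.1+1) γ t₀))) :=
      hwt.inner ((hcont.tendsto t₀).comp (hst j))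
    have hA0 : (fun k => (inner ℝ (n (φ k)) (iteratedDeriv (j.1+1) γ (s (φ k) j)) : ℝ))
        = fun _ => 0 := funext fun k => hzero (φ k) j
    rw [hA0] at hA
    exact (tendsto_nhds_unique tendsto_const_nhds hA).symm
  have hker : Submodule.span ℝ
      {iteratedDeriv 1 γ t₀, iteratedDeriv 2 γ t₀, iteratedDeriv 3 γ t₀, iteratedDeriv 4 γ t₀}
      ≤ LinearMap.ker ((innerSL ℝ w : EuclideanSpace ℝ (Fin 3) →L[ℝ] ℝ) : EuclideanSpace ℝ (Fin 3) →ₗ[ℝ] ℝ) := by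
    rw [Submodule.span_le]
    intro x hx
    simp only [Set.mem_insert_iff, Set.mem_singleton_iff] at hx
    rcases hx with h | h | h | h
    · simpa [h, LinearMap.mem_ker] using hlim 0
    · simpa [h, LinearMap.mem_ker] using hlim 1
    · simpa [h, LinearMap.mem_ker] using hlim 2
    · simpa [h, LinearMap.mem_ker] using hlim 3
  rw [hspan, top_le_iff] at hker
  have hw0 : (inner ℝ w w : ℝ) = 0 := by
    have : w ∈ LinearMap.ker ((innerSL ℝ w : EuclideanSpace ℝ (Fin 3) →L[ℝ] ℝ) : EuclideanSpace ℝ (Fin 3) →ₗ[ℝ] ℝ) := by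
      rw [hker]; trivial
    simpa using this
  rw [inner_self_eq_zero.mp hw0] at hwnorm
  simp at hwnorm
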